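/- Fix a ∈ (0, π) and a function q : ℝ → ℂ, square-integrable on (0, π), with q(x) = 0 for all x outside (a, π). Fix ρ ∈ ℂ, ρ ≠ 0, λ = ρ². For ν ∈ {0,1} let y_{0,0}(x,λ) = cos(ρx), y_{1,0}(x,λ) = sin(ρx)/ρ, and y_{ν,k}(x,λ) = ∫_a^x (sin ρ(x−t)/ρ) q(t) y_{ν,k−1}(t−a, λ) dt for k = 1, 2. Let ω(x) = ∫_a^x q(t) dt, ω₁(x) = ∫_{2a}^x q(t) ω(t−a) dt, and R_ν(x,t) = q(t+a) ∫_a^t q(τ) dτ − q(t) ∫_{t+a}^x q(τ) dτ + (−1)^ν ∫_{t+a}^x q(τ) q(τ−t) dτ. Then for every ν ∈ {0,1} and every x with 2a ≤ x ≤ π: y_{ν,2}(x,λ) = −(ω₁(x)/(4λ)) y_{ν,0}(x−2a, λ) + ((−1)^ν/(4λ)) ∫_a^{x−a} R_ν(x,t) y_{ν,0}(x−2t, λ) dt. -/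

import Mathlib

open MeasureTheory Set
open scoped Real

noncomputable def y0 (ρ : ℂ) (ν : ℕ) (x : ℝ) : ℂ :=
  if ν = 0 then Complex.cos (ρ * (x : ℂ)) else Complex.sin (ρ * (x : ℂ)) / ρ

noncomputable def ySeq (a : ℝ) (q : ℝ → ℂ) (ρ : ℂ) (ν : ℕ) : ℕ → ℝ → ℂ
  | 0 => y0 ρ ν
  | k + 1 => fun x => ∫ t in a..x,
      (Complex.sin (ρ * ((x - t : ℝ) : ℂ)) / ρ) * q t * ySeq a q ρ ν k (t - a)
noncomputable def Rfun (a : ℝ) (q : ℝ → ℂ) (ν : ℕ) (x t : ℝ) : ℂ :=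
  q (t + a) * (∫ τ in a..t, q τ) - q t * (∫ τ in (t + a)..x, q τ)
    + (-1) ^ ν * ∫ τ in (t + a)..x, q τ * q (τ - t)

noncomputable def omega1 (a : ℝ) (q : ℝ → ℂ) (x : ℝ) : ℂ :=
  ∫ t in (2 * a)..x, q t * (∫ τ in a..(t - a), q τ)

noncomputable def Ef (ρ : ℂ) (ν : ℕ) (u : ℝ) : ℂ :=
  if ν = 0 then ρ * Complex.sin (ρ * (u : ℂ)) else Complex.cos (ρ * (u : ℂ))

noncomputable def omg (a : ℝ) (g : ℝ → ℂ) (u : ℝ) : ℂ := ∫ s in a..u, g s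

lemma y0_cont (ρ : ℂ) (ν : ℕ) : Continuous (y0 ρ ν) := by
  unfold y0; split_ifs
  · exact Complex.continuous_cos.comp (continuous_const.mul Complex.continuous_ofReal)
  · exact (Complex.continuous_sin.comp (continuous_const.mul Complex.continuous_ofReal)).div_const ρ

lemma Ef_cont (ρ : ℂ) (ν : ℕ) : Continuous (Ef ρ ν) := by
  unfold Ef; split_ifs
  · exact continuous_const.mul
      (Complex.continuous_sin.comp (continuous_const.mul Complex.continuous_ofReal))
  · exact Complex.continuous_cos.comp (continuous_const.mul Complex.continuous_ofReal)

lemma trig1 {ρ : ℂ} (hρ : ρ ≠ 0) {ν : ℕ} (hν : ν = 0 ∨ ν = 1) (A B : ℝ) :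
    Complex.sin (ρ * (A : ℂ)) / ρ * y0 ρ ν B
      = (1/(2*ρ^2)) * ((-1)^ν * Ef ρ ν (A+B) + Ef ρ ν (A-B)) := by
  rcases hν with h | h <;> subst h <;>
    simp only [y0, Ef, if_true, if_pos rfl, pow_zero, pow_one, one_mul,
      reduceIte, one_ne_zero, if_false, Complex.ofReal_add, Complex.ofReal_sub, mul_add, mul_sub,
      Complex.sin_add, Complex.sin_sub, Complex.cos_add, Complex.cos_sub] <;>
    · field_simp
      ring

lemma trig2 {ρ : ℂ} (hρ : ρ ≠ 0) {ν : ℕ} (hν : ν = 0 ∨ ν = 1) (A B : ℝ) :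
    Complex.sin (ρ * (A : ℂ)) / ρ * Ef ρ ν B
      = (1/2) * (y0 ρ ν (A-B) - (-1)^ν * y0 ρ ν (A+B)) := by
  rcases hν with h | h <;> subst h <;>
    simp only [y0, Ef, if_true, if_pos rfl, pow_zero, pow_one, one_mul,
      reduceIte, one_ne_zero, if_false, Complex.ofReal_add, Complex.ofReal_sub, mul_add, mul_sub,
      Complex.sin_add, Complex.sin_sub, Complex.cos_add, Complex.cos_sub] <;>
    · field_simp
      ring

lemma ivind {a : ℝ} (h : ℝ → ℂ) (c : ℝ) (h0 : ∀ s, c < s → s ≤ a → h s = 0) :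
    (∫ s in a..c, h s) = ∫ s, (Ioc a c).indicator h s := by
  rcases le_or_gt a c with hc | hc
  · rw [intervalIntegral.integral_of_le hc, integral_indicator measurableSet_Ioc]
  · rw [intervalIntegral.integral_of_ge hc.le, Ioc_eq_empty (not_lt.mpr hc.le)]
    have : ∀ s ∈ Ioc c a, h s = 0 := fun s hs => h0 s hs.1 hs.2
    rw [setIntegral_congr_fun measurableSet_Ioc this]
    simp

lemma tri_fubini {a x : ℝ} (ha : 0 < a) (hx : 2*a ≤ x) (F : ℝ → ℝ → ℂ)
    (hFi : IntegrableOn (Function.uncurry F) (Ioc a x ×ˢ Ioc a x))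
    (hF0 : ∀ t s, s ≤ a → t ≤ s + a → F t s = 0) :
    ((∫ t in a..x, ∫ s in a..(t-a), F t s) = ∫ s in a..(x-a), ∫ t in (s+a)..x, F t s)
    ∧ IntervalIntegrable (fun s => ∫ t in (s+a)..x, F t s) volume a (x-a) := by
  have hax : a ≤ x := by linarith
  have haxa : a ≤ x - a := by linarith
  set T : Set (ℝ×ℝ) := {p | a < p.2 ∧ p.2 + a ≤ p.1 ∧ p.1 ≤ x} with hTdef
  have hT : MeasurableSet T := by
    apply MeasurableSet.inter (measurableSet_lt measurable_const measurable_snd)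
    exact (measurableSet_le (measurable_snd.add_const a) measurable_fst).inter
      (measurableSet_le measurable_fst measurable_const)
  set Φ : ℝ × ℝ → ℂ := T.indicator (Function.uncurry F) with hΦdef
  have hTsub : T ⊆ Ioc a x ×ˢ Ioc a x := by
    rintro ⟨t, s⟩ ⟨h1, h2, h3⟩
    exact ⟨⟨by simp at h1 h2 ⊢; linarith, h3⟩, h1, by simp at h1 h2 h3 ⊢; linarith⟩
  have hΦi : Integrable Φ (volume.prod volume) := by
    have := (hFi.mono_set hTsub).integrable_indicator hT
    rwa [← Measure.volume_eq_prod]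
  have hinner : ∀ t, (∫ s in a..(t-a), F t s) = ∫ s, (Ioc a (t-a)).indicator (F t) s :=
    fun t => ivind (F t) (t-a) (fun s h1 h2 => hF0 t s h2 (by linarith))
  have hpt1 : ∀ t, (Ioc a x).indicator (fun t => ∫ s, (Ioc a (t-a)).indicator (F t) s) t
      = ∫ s, Φ (t, s) := by
    intro t
    by_cases ht : t ∈ Ioc a x
    · rw [indicator_of_mem ht]
      congr 1
      funext s
      rw [indicator_apply, hΦdef, indicator_apply]
      have : s ∈ Ioc a (t-a) ↔ (t, s) ∈ T := by
        simp only [mem_Ioc, hTdef, mem_setOf_eq]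
        constructor
        · rintro ⟨h1, h2⟩; exact ⟨h1, by linarith, ht.2⟩
        · rintro ⟨h1, h2, h3⟩; exact ⟨h1, by linarith⟩
      rw [if_congr this rfl rfl]
      rfl
    · rw [indicator_of_notMem ht]
      symm
      have hz : ∀ s, Φ (t, s) = 0 := by
        intro s
        apply indicator_of_notMem
        rintro ⟨h1, h2, h3⟩
        simp only [mem_Ioc, not_and, not_le] at ht
        simp only at h1 h2 h3
        rcases le_or_gt t a with h | h
        · linarith
        · linarith [ht h]
      simp [hz]
  have hL : (∫ t in a..x, ∫ s in a..(t-a), F t s) = ∫ t, ∫ s, Φ (t, s) := by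
    rw [ivind _ x (fun t h1 h2 => by linarith)]
    congr 1
    funext t
    rw [← hpt1 t]
    congr 1
    funext t'
    exact hinner t'
  have hpt2 : ∀ s, (Ioc a (x-a)).indicator (fun s => ∫ t in (s+a)..x, F t s) s
      = ∫ t, Φ (t, s) := by
    intro s
    by_cases hs : s ∈ Ioc a (x-a)
    · rw [indicator_of_mem hs]
      have h1 : (fun t => Φ (t, s)) = (Icc (s+a) x).indicator (fun t => F t s) := by
        funext t
        rw [hΦdef, indicator_apply, indicator_apply]
        have : (t, s) ∈ T ↔ t ∈ Icc (s+a) x := by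
          simp only [hTdef, mem_setOf_eq, mem_Icc]
          exact ⟨fun ⟨u1, u2, u3⟩ => ⟨u2, u3⟩, fun ⟨u1, u2⟩ => ⟨hs.1, u1, u2⟩⟩
        rw [if_congr this rfl rfl]
        rfl
      rw [h1, integral_indicator measurableSet_Icc,
        intervalIntegral.integral_of_le (by rcases hs with ⟨u1, u2⟩; linarith),
        setIntegral_congr_set Ioc_ae_eq_Icc]
    · rw [indicator_of_notMem hs]
      symm
      have hz : ∀ t, Φ (t, s) = 0 := by
        intro t
        simp only [mem_Ioc, not_and, not_le] at hs
        rcases le_or_gt s a with h | h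
        · rw [hΦdef]
          by_cases hmem : (t, s) ∈ T
          · exact absurd hmem.1 (not_lt.mpr h)
          · exact indicator_of_notMem hmem _
        · apply indicator_of_notMem
          rintro ⟨h1, h2, h3⟩
          simp only at h1 h2 h3
          linarith [hs h]
      simp [hz]
  have hR : (∫ s in a..(x-a), ∫ t in (s+a)..x, F t s) = ∫ s, ∫ t, Φ (t, s) := by
    rw [ivind _ (x-a) (fun s h1 h2 => by linarith)]
    congr 1
    funext s
    exact hpt2 s
  have hswap : (∫ t, ∫ s, Φ (t, s)) = ∫ s, ∫ t, Φ (t, s) := by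
    apply integral_integral_swap
    exact hΦi
  constructor
  · rw [hL, hswap, ← hR]
  · have hint : Integrable (fun s => ∫ t, Φ (t, s)) volume := hΦi.integral_prod_right
    have hind : Integrable ((Ioc a (x-a)).indicator (fun s => ∫ t in (s+a)..x, F t s)) volume :=
      hint.congr (Filter.Eventually.of_forall fun s => (hpt2 s).symm)
    rw [intervalIntegrable_iff_integrableOn_Ioc_of_le haxa]
    exact (integrable_indicator_iff measurableSet_Ioc).mp hind

set_option maxHeartbeats 1000000 in
theorem statement4
    (a : ℝ) (ha : a ∈ Set.Ioo 0 π)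
    (q : ℝ → ℂ)
    (hq2 : MemLp q 2 (volume.restrict (Set.Ioo 0 π)))
    (hq0 : ∀ x : ℝ, x ∉ Set.Ioo a π → q x = 0)
    (ρ : ℂ) (hρ : ρ ≠ 0) (lam : ℂ) (hlam : lam = ρ ^ 2) :
    ∀ ν : ℕ, (ν = 0 ∨ ν = 1) → ∀ x : ℝ, 2 * a ≤ x → x ≤ π →
      ySeq a q ρ ν 2 x
        = -(omega1 a q x / (4 * lam)) * y0 ρ ν (x - 2 * a)
          + ((-1) ^ ν / (4 * lam)) * ∫ t in a..(x - a), Rfun a q ν x t * y0 ρ ν (x - 2 * t) := by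
  obtain ⟨ha0, hapi⟩ := ha
  haveI : IsFiniteMeasure (volume.restrict (Set.Ioo 0 π)) :=
    ⟨by rw [Measure.restrict_apply_univ]; exact measure_Ioo_lt_top⟩
  have m := hq2.aestronglyMeasurable
  set g : ℝ → ℂ := (Ioo a π).indicator (m.mk q) with hgdef
  have hgm : StronglyMeasurable g := m.stronglyMeasurable_mk.indicator measurableSet_Ioo
  have hsub : Ioo a π ⊆ Ioo 0 π := fun t ht => ⟨lt_trans ha0 ht.1, ht.2⟩
  have hqg : q =ᵐ[volume] g := by
    have h1 : ∀ᵐ t, t ∈ Ioo 0 π → q t = m.mk q t :=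
      (ae_restrict_iff' measurableSet_Ioo).mp m.ae_eq_mk
    filter_upwards [h1] with t ht
    by_cases h2 : t ∈ Ioo a π
    · rw [hgdef, indicator_of_mem h2]; exact ht (hsub h2)
    · rw [hq0 t h2, hgdef, indicator_of_notMem h2]
  have hg0 : ∀ t, t ∉ Ioo a π → g t = 0 := fun t ht => indicator_of_notMem ht _
  have hg0' : ∀ t, t ≤ a → g t = 0 := fun t ht => hg0 t fun h => absurd h.1 (not_lt.mpr ht)
  have hqint : IntegrableOn q (Ioo 0 π) := hq2.integrable one_le_two
  have hmkint : IntegrableOn (m.mk q) (Ioo a π) :=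
    (hqint.mono_set hsub).congr (ae_restrict_of_ae_restrict_of_subset hsub m.ae_eq_mk)
  have hgint : Integrable g volume := by
    rw [hgdef]; exact hmkint.integrable_indicator measurableSet_Ioo
  have hgiv : ∀ c d : ℝ, IntervalIntegrable g volume c d := fun c d => hgint.intervalIntegrable
  intro ν hν x h2a hxpi
  have hIq : ∀ c d : ℝ, (∫ τ in c..d, q τ) = ∫ τ in c..d, g τ := fun c d =>
    intervalIntegral.integral_congr_ae (by filter_upwards [hqg] with τ h _; exact h)
  suffices hgoal : ySeq a g ρ ν 2 x
      = -(omega1 a g x / (4 * lam)) * y0 ρ ν (x - 2 * a)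
        + ((-1) ^ ν / (4 * lam)) * ∫ t in a..(x - a), Rfun a g ν x t * y0 ρ ν (x - 2 * t) by
    have hy1qg : ∀ τ : ℝ, ySeq a q ρ ν 1 τ = ySeq a g ρ ν 1 τ := by
      intro τ
      show (∫ t in a..τ, Complex.sin (ρ * ((τ - t : ℝ) : ℂ)) / ρ * q t * ySeq a q ρ ν 0 (t - a))
        = ∫ t in a..τ, Complex.sin (ρ * ((τ - t : ℝ) : ℂ)) / ρ * g t * ySeq a g ρ ν 0 (t - a)
      apply intervalIntegral.integral_congr_ae
      filter_upwards [hqg] with t ht _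
      rw [ht]
      rfl
    have hy2qg : ySeq a q ρ ν 2 x = ySeq a g ρ ν 2 x := by
      show (∫ t in a..x, Complex.sin (ρ * ((x - t : ℝ) : ℂ)) / ρ * q t * ySeq a q ρ ν 1 (t - a))
        = ∫ t in a..x, Complex.sin (ρ * ((x - t : ℝ) : ℂ)) / ρ * g t * ySeq a g ρ ν 1 (t - a)
      apply intervalIntegral.integral_congr_ae
      filter_upwards [hqg] with t ht _
      rw [ht, hy1qg]
    have homega : omega1 a q x = omega1 a g x := by
      unfold omega1
      apply intervalIntegral.integral_congr_ae
      filter_upwards [hqg] with t ht _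
      rw [ht, hIq]
    have htr : ∀ᵐ t : ℝ, q (t + a) = g (t + a) :=
      hqg.comp_tendsto (measurePreserving_add_right volume a).quasiMeasurePreserving.tendsto_ae
    have hconv : ∀ t : ℝ, (∫ τ in (t + a)..x, q τ * q (τ - t))
        = ∫ τ in (t + a)..x, g τ * g (τ - t) := by
      intro t
      apply intervalIntegral.integral_congr_ae
      have h2 : ∀ᵐ τ : ℝ, q (τ - t) = g (τ - t) := by
        have := hqg.comp_tendsto
          (measurePreserving_add_right volume (-t)).quasiMeasurePreserving.tendsto_ae
        simp only [sub_eq_add_neg]; exact this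
      filter_upwards [hqg, h2] with τ h1' h2' _
      rw [h1', h2']
    have hRint : (∫ t in a..(x - a), Rfun a q ν x t * y0 ρ ν (x - 2 * t))
        = ∫ t in a..(x - a), Rfun a g ν x t * y0 ρ ν (x - 2 * t) := by
      apply intervalIntegral.integral_congr_ae
      filter_upwards [hqg, htr] with t h1 h2 _
      unfold Rfun
      rw [h1, h2, hIq, hIq, hconv]
    rw [hy2qg, homega, hRint]
    exact hgoal
  -- ===== main computation with the nice representative g =====
  subst hlam
  have hax : a ≤ x := by linarith
  have haxa : a ≤ x - a := by linarith
  have hyc := y0_cont ρ ν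
  have hEc := Ef_cont ρ ν
  obtain ⟨C, hC⟩ := (isCompact_Icc (a := -π) (b := π)).exists_bound_of_continuousOn
    hyc.continuousOn
  have hC0 : 0 ≤ C := le_trans (norm_nonneg _) (hC 0 ⟨by linarith [Real.pi_pos], Real.pi_pos.le⟩)
  have hωc : Continuous (omg a g) := intervalIntegral.continuous_primitive hgiv a
  have hω0 : ∀ u, u ≤ a → omg a g u = 0 := by
    intro u hu
    unfold omg
    rw [ivind g u fun s h1 h2 => hg0' s h2, Ioc_eq_empty (not_lt.mpr hu)]
    simp
  -- closed form of the first iterate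
  have hy1 : ∀ τ : ℝ,
      (∫ t in a..τ, Complex.sin (ρ * ((τ - t : ℝ) : ℂ)) / ρ * g t * y0 ρ ν (t - a))
        = (1/(2*ρ^2)) * ((-1:ℂ)^ν * omg a g τ * Ef ρ ν (τ - a)
            + ∫ s in a..τ, g s * Ef ρ ν (τ + a - 2*s)) := by
    intro τ
    have key : ∀ t : ℝ, Complex.sin (ρ * ((τ - t : ℝ) : ℂ)) / ρ * g t * y0 ρ ν (t - a)
        = ((-1:ℂ)^ν/(2*ρ^2)) * (g t * Ef ρ ν (τ - a))
          + (1/(2*ρ^2)) * (g t * Ef ρ ν (τ + a - 2*t)) := by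
      intro t
      have h1 := trig1 hρ hν (τ - t) (t - a)
      rw [show τ - t + (t - a) = τ - a by ring, show τ - t - (t - a) = τ + a - 2*t by ring] at h1
      calc Complex.sin (ρ * ((τ - t : ℝ) : ℂ)) / ρ * g t * y0 ρ ν (t - a)
          = g t * (Complex.sin (ρ * ((τ - t : ℝ) : ℂ)) / ρ * y0 ρ ν (t - a)) := by ring
        _ = _ := by rw [h1]; ring
    rw [intervalIntegral.integral_congr fun t _ => key t]
    have i1 : IntervalIntegrable
        (fun t => ((-1:ℂ)^ν/(2*ρ^2)) * (g t * Ef ρ ν (τ - a))) volume a τ :=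
      ((hgiv a τ).mul_const _).const_mul _
    have i2 : IntervalIntegrable
        (fun t => (1/(2*ρ^2):ℂ) * (g t * Ef ρ ν (τ + a - 2*t))) volume a τ :=
      ((hgiv a τ).mul_continuousOn ((hEc.comp (continuous_const.sub (continuous_const.mul continuous_id))).continuousOn)).const_mul _
    rw [intervalIntegral.integral_add i1 i2, intervalIntegral.integral_const_mul,
      intervalIntegral.integral_const_mul, intervalIntegral.integral_mul_const]
    unfold omg
    ring
  have hy1' : ∀ t : ℝ,
      (∫ t' in a..(t-a), Complex.sin (ρ * ((t - a - t' : ℝ) : ℂ)) / ρ * g t' * y0 ρ ν (t' - a))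
        = (1/(2*ρ^2)) * ((-1:ℂ)^ν * omg a g (t-a) * Ef ρ ν (t - 2*a)
            + ∫ s in a..(t-a), g s * Ef ρ ν (t - 2*s)) := by
    intro t
    rw [hy1 (t-a), show t - a - a = t - 2*a by ring]
    have e : (∫ s in a..(t-a), g s * Ef ρ ν (t - a + a - 2*s))
        = ∫ s in a..(t-a), g s * Ef ρ ν (t - 2*s) :=
      intervalIntegral.integral_congr fun s _ => by rw [show t - a + a - 2*s = t - 2*s by ring]
    rw [e]
  have hJ2 : ∀ t : ℝ, Complex.sin (ρ * ((x - t : ℝ) : ℂ)) / ρ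
        * (∫ s in a..(t-a), g s * Ef ρ ν (t - 2*s))
      = (1/2) * (∫ s in a..(t-a), g s * y0 ρ ν (x - 2*t + 2*s))
        - ((-1:ℂ)^ν/2) * (∫ s in a..(t-a), g s * y0 ρ ν (x - 2*s)) := by
    intro t
    rw [← intervalIntegral.integral_const_mul]
    have key : ∀ s : ℝ, Complex.sin (ρ * ((x - t:ℝ):ℂ)) / ρ * (g s * Ef ρ ν (t - 2*s))
        = (1/2) * (g s * y0 ρ ν (x - 2*t + 2*s)) - ((-1:ℂ)^ν/2) * (g s * y0 ρ ν (x - 2*s)) := by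
      intro s
      have h2 := trig2 hρ hν (x - t) (t - 2*s)
      rw [show x - t - (t - 2*s) = x - 2*t + 2*s by ring,
        show x - t + (t - 2*s) = x - 2*s by ring] at h2
      calc Complex.sin (ρ * ((x - t:ℝ):ℂ)) / ρ * (g s * Ef ρ ν (t - 2*s))
          = g s * (Complex.sin (ρ * ((x - t:ℝ):ℂ)) / ρ * Ef ρ ν (t - 2*s)) := by ring
        _ = _ := by rw [h2]; ring
    rw [intervalIntegral.integral_congr fun s _ => key s]
    have i1 : IntervalIntegrable
        (fun s => (1/2:ℂ) * (g s * y0 ρ ν (x - 2*t + 2*s))) volume a (t-a) :=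
      ((hgiv a (t-a)).mul_continuousOn ((hyc.comp (continuous_const.add (continuous_const.mul continuous_id))).continuousOn)).const_mul _
    have i2 : IntervalIntegrable
        (fun s => ((-1:ℂ)^ν/2) * (g s * y0 ρ ν (x - 2*s))) volume a (t-a) :=
      ((hgiv a (t-a)).mul_continuousOn ((hyc.comp (continuous_const.sub (continuous_const.mul continuous_id))).continuousOn)).const_mul _
    rw [intervalIntegral.integral_sub i1 i2, intervalIntegral.integral_const_mul,
      intervalIntegral.integral_const_mul]
  have hkey : ∀ t : ℝ, Complex.sin (ρ * ((x - t:ℝ):ℂ)) / ρ * g t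
        * (∫ t' in a..(t-a), Complex.sin (ρ * ((t - a - t' : ℝ) : ℂ)) / ρ * g t' * y0 ρ ν (t' - a))
      = ((-1:ℂ)^ν/(4*ρ^2)) * (g t * (omg a g (t-a) * y0 ρ ν (x - 2*t + 2*a)))
        + (-(((-1:ℂ)^ν)^2)/(4*ρ^2) * y0 ρ ν (x - 2*a)) * (g t * omg a g (t-a))
        + (1/(4*ρ^2)) * (g t * ∫ s in a..(t-a), g s * y0 ρ ν (x - 2*t + 2*s))
        + (-(-1:ℂ)^ν/(4*ρ^2)) * (g t * ∫ s in a..(t-a), g s * y0 ρ ν (x - 2*s)) := by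
    intro t
    rw [hy1' t]
    have h2 := trig2 hρ hν (x - t) (t - 2*a)
    rw [show x - t - (t - 2*a) = x - 2*t + 2*a by ring,
      show x - t + (t - 2*a) = x - 2*a by ring] at h2
    have h3 := hJ2 t
    calc Complex.sin (ρ * ((x - t:ℝ):ℂ)) / ρ * g t
          * ((1/(2*ρ^2)) * ((-1:ℂ)^ν * omg a g (t-a) * Ef ρ ν (t - 2*a)
              + ∫ s in a..(t-a), g s * Ef ρ ν (t - 2*s)))
        = ((-1:ℂ)^ν/(2*ρ^2)) * (g t * omg a g (t-a))
            * (Complex.sin (ρ * ((x - t:ℝ):ℂ)) / ρ * Ef ρ ν (t - 2*a))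
          + (1/(2*ρ^2)) * g t
            * (Complex.sin (ρ * ((x - t:ℝ):ℂ)) / ρ
                * (∫ s in a..(t-a), g s * Ef ρ ν (t - 2*s))) := by ring
      _ = _ := by rw [h2, h3]; ring
  -- interval integrability of the four pieces on [a, x]
  have hf1 : IntervalIntegrable
      (fun t => g t * (omg a g (t-a) * y0 ρ ν (x - 2*t + 2*a))) volume a x :=
    (hgiv a x).mul_continuousOn
      (((hωc.comp (continuous_id.sub continuous_const)).mul
        (hyc.comp ((continuous_const.sub (continuous_const.mul continuous_id)).add
          continuous_const))).continuousOn)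
  have hf2 : IntervalIntegrable (fun t => g t * omg a g (t-a)) volume a x :=
    (hgiv a x).mul_continuousOn
      ((hωc.comp (continuous_id.sub continuous_const)).continuousOn)
  have hf4 : IntervalIntegrable
      (fun t => g t * ∫ s in a..(t-a), g s * y0 ρ ν (x - 2*s)) volume a x := by
    apply (hgiv a x).mul_continuousOn
    apply Continuous.continuousOn
    have hpc : Continuous fun u : ℝ => ∫ s in a..u, g s * y0 ρ ν (x - 2*s) :=
      intervalIntegral.continuous_primitive
        (fun c d => (hgiv c d).mul_continuousOn
          ((hyc.comp (continuous_const.sub (continuous_const.mul continuous_id))).continuousOn)) a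
    exact hpc.comp (continuous_id.sub continuous_const)
  -- strong measurability and bound for the K-term
  have hWm : StronglyMeasurable ({p : ℝ×ℝ | a < p.2 ∧ p.2 ≤ p.1 - a}.indicator
      (fun p => g p.2 * y0 ρ ν (x - 2*p.1 + 2*p.2))) := by
    apply StronglyMeasurable.indicator
    · apply Measurable.stronglyMeasurable
      exact (hgm.measurable.comp measurable_snd).mul
        (hyc.measurable.comp ((measurable_const.sub (measurable_fst.const_mul 2)).add
          (measurable_snd.const_mul 2)))
    · exact (measurableSet_lt measurable_const measurable_snd).inter
        (measurableSet_le measurable_snd (measurable_fst.sub measurable_const))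
  have hKW : ∀ t : ℝ, (∫ s in a..(t-a), g s * y0 ρ ν (x - 2*t + 2*s))
      = ∫ s, ({p : ℝ×ℝ | a < p.2 ∧ p.2 ≤ p.1 - a}.indicator
          (fun p => g p.2 * y0 ρ ν (x - 2*p.1 + 2*p.2))) (t, s) := by
    intro t
    rw [ivind _ (t-a) fun s h1 h2 => by rw [hg0' s h2]; ring]
    have hfe : (Ioc a (t-a)).indicator (fun s => g s * y0 ρ ν (x - 2*t + 2*s))
        = fun s => ({p : ℝ×ℝ | a < p.2 ∧ p.2 ≤ p.1 - a}.indicator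
            (fun p => g p.2 * y0 ρ ν (x - 2*p.1 + 2*p.2))) (t, s) := by
      funext s
      rw [indicator_apply, indicator_apply]
      have hiff : s ∈ Ioc a (t-a) ↔ (t,s) ∈ {p : ℝ×ℝ | a < p.2 ∧ p.2 ≤ p.1 - a} := by
        simp [mem_Ioc, mem_setOf_eq]
      exact if_congr hiff rfl rfl
    rw [hfe]
  have hKm : StronglyMeasurable
      (fun t => ∫ s in a..(t-a), g s * y0 ρ ν (x - 2*t + 2*s)) := by
    have heq : (fun t => ∫ s in a..(t-a), g s * y0 ρ ν (x - 2*t + 2*s))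
        = fun t => ∫ s, ({p : ℝ×ℝ | a < p.2 ∧ p.2 ≤ p.1 - a}.indicator
            (fun p => g p.2 * y0 ρ ν (x - 2*p.1 + 2*p.2))) (t, s) := funext hKW
    rw [heq]
    exact hWm.integral_prod_right'
  have hKbd : ∀ t, a < t → t ≤ x →
      ‖∫ s in a..(t-a), g s * y0 ρ ν (x - 2*t + 2*s)‖ ≤ C * ∫ u, ‖g u‖ := by
    intro t ht1 ht2
    have hnn : (0:ℝ) ≤ C * ∫ u, ‖g u‖ :=
      mul_nonneg hC0 (integral_nonneg fun u => norm_nonneg _)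
    rcases le_or_gt (t-a) a with h | h
    · have hz : (∫ s in a..(t-a), g s * y0 ρ ν (x - 2*t + 2*s)) = 0 := by
        rw [ivind _ (t-a) fun s h1 h2 => by rw [hg0' s h2]; ring,
          Ioc_eq_empty (not_lt.mpr h)]
        simp
      rw [hz, norm_zero]
      exact hnn
    · rw [intervalIntegral.integral_of_le (by linarith)]
      calc ‖∫ s in Ioc a (t-a), g s * y0 ρ ν (x - 2*t + 2*s)‖
          ≤ ∫ s in Ioc a (t-a), ‖g s * y0 ρ ν (x - 2*t + 2*s)‖ :=
            norm_integral_le_integral_norm _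
        _ ≤ ∫ s in Ioc a (t-a), ‖g s‖ * C := by
            apply integral_mono_of_nonneg
              (Filter.Eventually.of_forall fun s => norm_nonneg _)
              ((hgint.norm.mul_const C).integrableOn)
            refine (ae_restrict_iff' measurableSet_Ioc).mpr
              (Filter.Eventually.of_forall fun s hs => ?_)
            simp only
            rw [norm_mul]
            apply mul_le_mul_of_nonneg_left _ (norm_nonneg _)
            apply hC
            constructor
            · simp only [mem_Ioc] at hs; linarith [hs.1, hs.2, Real.pi_pos]
            · simp only [mem_Ioc] at hs; linarith [hs.1, hs.2]
        _ = (∫ s in Ioc a (t-a), ‖g s‖) * C := by rw [integral_mul_const]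
        _ ≤ (∫ s, ‖g s‖) * C := by
            apply mul_le_mul_of_nonneg_right _ hC0
            exact setIntegral_le_integral hgint.norm
              (Filter.Eventually.of_forall fun s => norm_nonneg _)
        _ = C * ∫ u, ‖g u‖ := by ring
  have hf3 : IntervalIntegrable
      (fun t => g t * ∫ s in a..(t-a), g s * y0 ρ ν (x - 2*t + 2*s)) volume a x := by
    rw [intervalIntegrable_iff_integrableOn_Ioc_of_le hax]
    apply Integrable.mono' ((hgint.norm.const_mul (C * ∫ u, ‖g u‖)).integrableOn)
      ((hgm.mul hKm).aestronglyMeasurable.restrict)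
    rw [ae_restrict_iff' measurableSet_Ioc]
    apply Filter.Eventually.of_forall
    intro t ht
    simp only [Pi.mul_apply]
    rw [norm_mul]
    calc ‖g t‖ * ‖∫ s in a..(t-a), g s * y0 ρ ν (x - 2*t + 2*s)‖
        ≤ ‖g t‖ * (C * ∫ u, ‖g u‖) :=
          mul_le_mul_of_nonneg_left (hKbd t ht.1 ht.2) (norm_nonneg _)
      _ = (C * ∫ u, ‖g u‖) * ‖g t‖ := mul_comm _ _
  -- split the second iterate into four integrals
  have hsplit : ySeq a g ρ ν 2 x
      = ((-1:ℂ)^ν/(4*ρ^2)) * (∫ t in a..x, g t * (omg a g (t-a) * y0 ρ ν (x - 2*t + 2*a)))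
        + (-(((-1:ℂ)^ν)^2)/(4*ρ^2) * y0 ρ ν (x - 2*a)) * (∫ t in a..x, g t * omg a g (t-a))
        + (1/(4*ρ^2)) * (∫ t in a..x, g t * ∫ s in a..(t-a), g s * y0 ρ ν (x - 2*t + 2*s))
        + (-(-1:ℂ)^ν/(4*ρ^2)) * (∫ t in a..x, g t * ∫ s in a..(t-a), g s * y0 ρ ν (x - 2*s)) := by
    show (∫ t in a..x, Complex.sin (ρ * ((x - t:ℝ):ℂ)) / ρ * g t
        * (∫ t' in a..(t-a), Complex.sin (ρ * ((t - a - t' : ℝ) : ℂ)) / ρ * g t' * y0 ρ ν (t' - a))) = _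
    rw [intervalIntegral.integral_congr fun t _ => hkey t]
    rw [intervalIntegral.integral_add (((hf1.const_mul _).add (hf2.const_mul _)).add
        (hf3.const_mul _)) (hf4.const_mul _),
      intervalIntegral.integral_add ((hf1.const_mul _).add (hf2.const_mul _)) (hf3.const_mul _),
      intervalIntegral.integral_add (hf1.const_mul _) (hf2.const_mul _),
      intervalIntegral.integral_const_mul, intervalIntegral.integral_const_mul,
      intervalIntegral.integral_const_mul, intervalIntegral.integral_const_mul]
  -- transform the first integral by the substitution u = t - a
  have hHI : ∀ c d : ℝ, IntervalIntegrable
      (fun u => g (u+a) * (omg a g u * y0 ρ ν (x - 2*u))) volume c d := by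
    intro c d
    have h1 : IntervalIntegrable (fun u => g (u+a)) volume c d := by
      have := (hgiv (c+a) (d+a)).comp_add_right a
      simpa using this
    exact h1.mul_continuousOn ((hωc.mul (hyc.comp
      (continuous_const.sub (continuous_const.mul continuous_id)))).continuousOn)
  have hI1 : (∫ t in a..x, g t * (omg a g (t-a) * y0 ρ ν (x - 2*t + 2*a)))
      = ∫ u in a..(x-a), g (u+a) * (omg a g u * y0 ρ ν (x - 2*u)) := by
    have e1 : ∀ t ∈ Set.uIcc a x, g t * (omg a g (t-a) * y0 ρ ν (x - 2*t + 2*a))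
        = (fun u => g (u+a) * (omg a g u * y0 ρ ν (x - 2*u))) (t - a) := by
      intro t _
      simp only
      rw [show t - a + a = t by ring, show x - 2*(t-a) = x - 2*t + 2*a by ring]
    have hstep : (∫ t in a..x, g t * (omg a g (t-a) * y0 ρ ν (x - 2*t + 2*a)))
        = ∫ u in (a-a)..(x-a), g (u+a) * (omg a g u * y0 ρ ν (x - 2*u)) :=
      (intervalIntegral.integral_congr e1).trans
        (intervalIntegral.integral_comp_sub_right
          (fun u => g (u+a) * (omg a g u * y0 ρ ν (x - 2*u))) a)
    rw [hstep, sub_self]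
    rw [← intervalIntegral.integral_add_adjacent_intervals (hHI 0 a) (hHI a (x-a))]
    have hzero : (∫ u in (0:ℝ)..a, g (u+a) * (omg a g u * y0 ρ ν (x - 2*u))) = 0 := by
      have e0 : ∀ u ∈ Set.uIcc (0:ℝ) a, g (u+a) * (omg a g u * y0 ρ ν (x - 2*u))
          = (fun _ => (0:ℂ)) u := by
        intro u hu
        rw [uIcc_of_le ha0.le] at hu
        rw [hω0 u hu.2]
        simp
      rw [intervalIntegral.integral_congr e0]
      simp
    rw [hzero, zero_add]
  -- the second integral is omega1
  have hI2 : (∫ t in a..x, g t * omg a g (t-a)) = omega1 a g x := by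
    have hH2 : ∀ c d : ℝ, IntervalIntegrable (fun t => g t * omg a g (t-a)) volume c d :=
      fun c d => (hgiv c d).mul_continuousOn
        ((hωc.comp (continuous_id.sub continuous_const)).continuousOn)
    rw [← intervalIntegral.integral_add_adjacent_intervals (hH2 a (2*a)) (hH2 (2*a) x)]
    have hzero : (∫ t in a..(2*a), g t * omg a g (t-a)) = 0 := by
      have e0 : ∀ t ∈ Set.uIcc a (2*a), g t * omg a g (t-a) = (fun _ => (0:ℂ)) t := by
        intro t ht
        rw [uIcc_of_le (by linarith)] at ht
        rw [hω0 (t-a) (by linarith [ht.2])]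
        simp
      rw [intervalIntegral.integral_congr e0]
      simp
    rw [hzero, zero_add]
    rfl
  -- Fubini for the L-term
  have hFCi : IntegrableOn (Function.uncurry fun t s => g t * (g s * y0 ρ ν (x - 2*s)))
      (Ioc a x ×ˢ Ioc a x) := by
    have h1 : Integrable g (volume.restrict (Ioc a x)) := hgint.integrableOn
    have h2 : Integrable (fun s => g s * y0 ρ ν (x - 2*s)) (volume.restrict (Ioc a x)) :=
      (intervalIntegrable_iff_integrableOn_Ioc_of_le hax).mp
        ((hgiv a x).mul_continuousOn
          ((hyc.comp (continuous_const.sub (continuous_const.mul continuous_id))).continuousOn))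
    have h3 := h1.mul_prod h2
    rw [Measure.prod_restrict] at h3
    rw [IntegrableOn, Measure.volume_eq_prod]
    exact h3
  obtain ⟨hTC, -⟩ := tri_fubini ha0 h2a (fun t s => g t * (g s * y0 ρ ν (x - 2*s))) hFCi
    (fun t s h1 _ => by beta_reduce; rw [hg0' s h1]; ring)
  have hI4 : (∫ t in a..x, g t * ∫ s in a..(t-a), g s * y0 ρ ν (x - 2*s))
      = ∫ u in a..(x-a), g u * ((∫ τ in (u+a)..x, g τ) * y0 ρ ν (x - 2*u)) := by
    calc (∫ t in a..x, g t * ∫ s in a..(t-a), g s * y0 ρ ν (x - 2*s))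
        = ∫ t in a..x, ∫ s in a..(t-a), g t * (g s * y0 ρ ν (x - 2*s)) := by
          apply intervalIntegral.integral_congr
          intro t _
          beta_reduce
          rw [intervalIntegral.integral_const_mul]
      _ = ∫ s in a..(x-a), ∫ t in (s+a)..x, g t * (g s * y0 ρ ν (x - 2*s)) := hTC
      _ = _ := by
          apply intervalIntegral.integral_congr
          intro s _
          beta_reduce
          rw [intervalIntegral.integral_mul_const]
          ring
  -- Fubini for the K-term (after substitution u = t - s inside)
  have hK' : ∀ t : ℝ, (∫ s in a..(t-a), g s * y0 ρ ν (x - 2*t + 2*s))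
      = ∫ u in a..(t-a), g (t-u) * y0 ρ ν (x - 2*u) := by
    intro t
    have e : ∀ s ∈ Set.uIcc a (t-a), g s * y0 ρ ν (x - 2*t + 2*s)
        = (fun u => g (t-u) * y0 ρ ν (x - 2*u)) (t - s) := by
      intro s _
      simp only
      rw [show t - (t - s) = s by ring, show x - 2*(t-s) = x - 2*t + 2*s by ring]
    have hstep : (∫ s in a..(t-a), g s * y0 ρ ν (x - 2*t + 2*s))
        = ∫ u in (t-(t-a))..(t-a), g (t-u) * y0 ρ ν (x - 2*u) :=
      (intervalIntegral.integral_congr e).trans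
        (intervalIntegral.integral_comp_sub_left (fun u => g (t-u) * y0 ρ ν (x - 2*u)) t)
    rw [hstep, show t - (t-a) = a by ring]
  have hFBm : StronglyMeasurable (Function.uncurry fun t u => g t * (g (t-u) * y0 ρ ν (x - 2*u))) := by
    apply Measurable.stronglyMeasurable
    show Measurable fun p : ℝ × ℝ => g p.1 * (g (p.1 - p.2) * y0 ρ ν (x - 2*p.2))
    exact (hgm.measurable.comp measurable_fst).mul
      ((hgm.measurable.comp (measurable_fst.sub measurable_snd)).mul
        (hyc.measurable.comp (measurable_const.sub (measurable_snd.const_mul 2))))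
  have hFBi : IntegrableOn (Function.uncurry fun t u => g t * (g (t-u) * y0 ρ ν (x - 2*u)))
      (Ioc a x ×ˢ Ioc a x) := by
    rw [IntegrableOn, Measure.volume_eq_prod, ← Measure.prod_restrict]
    have hmeas : AEStronglyMeasurable
        (Function.uncurry fun t u => g t * (g (t-u) * y0 ρ ν (x - 2*u)))
        ((volume.restrict (Ioc a x)).prod (volume.restrict (Ioc a x))) :=
      hFBm.aestronglyMeasurable
    rw [integrable_prod_iff hmeas]
    constructor
    · apply Filter.Eventually.of_forall
      intro t
      show Integrable (fun u => g t * (g (t-u) * y0 ρ ν (x - 2*u))) (volume.restrict (Ioc a x))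
      apply (intervalIntegrable_iff_integrableOn_Ioc_of_le hax).mp
      apply IntervalIntegrable.const_mul
      refine IntervalIntegrable.mul_continuousOn ?_
        ((hyc.comp (continuous_const.sub (continuous_const.mul continuous_id))).continuousOn)
      have h5 := (hgiv (t-x) (t-a)).comp_sub_left t
      simp only [sub_sub_cancel] at h5
      exact h5.symm
    · have hbd : ∀ t : ℝ,
          (∫ u, ‖g t * (g (t-u) * y0 ρ ν (x - 2*u))‖ ∂(volume.restrict (Ioc a x)))
            ≤ (C * ∫ v, ‖g v‖) * ‖g t‖ := by
        intro t
        have step1 : (∫ u, ‖g t * (g (t-u) * y0 ρ ν (x - 2*u))‖ ∂(volume.restrict (Ioc a x)))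
            ≤ ∫ u, (‖g t‖ * C) * ‖g (t-u)‖ ∂(volume.restrict (Ioc a x)) := by
          apply integral_mono_of_nonneg (Filter.Eventually.of_forall fun u => norm_nonneg _)
          · exact ((hgint.norm.comp_sub_left t).const_mul _).integrableOn
          · refine (ae_restrict_iff' measurableSet_Ioc).mpr
              (Filter.Eventually.of_forall fun u hu => ?_)
            simp only
            rw [norm_mul, norm_mul]
            calc ‖g t‖ * (‖g (t-u)‖ * ‖y0 ρ ν (x - 2*u)‖)
                ≤ ‖g t‖ * (‖g (t-u)‖ * C) := by
                  apply mul_le_mul_of_nonneg_left _ (norm_nonneg _)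
                  apply mul_le_mul_of_nonneg_left _ (norm_nonneg _)
                  apply hC
                  constructor
                  · simp only [mem_Ioc] at hu; linarith [hu.1, hu.2]
                  · simp only [mem_Ioc] at hu; linarith [hu.1, hu.2]
              _ = (‖g t‖ * C) * ‖g (t-u)‖ := by ring
        calc (∫ u, ‖g t * (g (t-u) * y0 ρ ν (x - 2*u))‖ ∂(volume.restrict (Ioc a x)))
            ≤ ∫ u, (‖g t‖ * C) * ‖g (t-u)‖ ∂(volume.restrict (Ioc a x)) := step1
          _ = (‖g t‖ * C) * ∫ u, ‖g (t-u)‖ ∂(volume.restrict (Ioc a x)) := by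
              rw [integral_const_mul]
          _ ≤ (‖g t‖ * C) * ∫ u, ‖g (t-u)‖ := by
              apply mul_le_mul_of_nonneg_left _ (mul_nonneg (norm_nonneg _) hC0)
              exact setIntegral_le_integral (hgint.norm.comp_sub_left t)
                (Filter.Eventually.of_forall fun u => norm_nonneg _)
          _ = (‖g t‖ * C) * ∫ v, ‖g v‖ := by
              rw [integral_sub_left_eq_self (fun v => ‖g v‖) volume t]
          _ = (C * ∫ v, ‖g v‖) * ‖g t‖ := by ring
      apply Integrable.mono' ((hgint.norm.const_mul (C * ∫ v, ‖g v‖)).integrableOn)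
        (hmeas.norm.integral_prod_right')
      apply Filter.Eventually.of_forall
      intro t
      rw [Real.norm_of_nonneg (integral_nonneg fun u => norm_nonneg _)]
      exact hbd t
  obtain ⟨hTB, hP3i⟩ := tri_fubini ha0 h2a (fun t u => g t * (g (t-u) * y0 ρ ν (x - 2*u))) hFBi
    (fun t u h1 h2 => by beta_reduce; rw [hg0' (t-u) (by linarith)]; ring)
  have hI3 : (∫ t in a..x, g t * ∫ s in a..(t-a), g s * y0 ρ ν (x - 2*t + 2*s))
      = ∫ u in a..(x-a), (∫ τ in (u+a)..x, g τ * g (τ-u)) * y0 ρ ν (x - 2*u) := by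
    calc (∫ t in a..x, g t * ∫ s in a..(t-a), g s * y0 ρ ν (x - 2*t + 2*s))
        = ∫ t in a..x, ∫ u in a..(t-a), g t * (g (t-u) * y0 ρ ν (x - 2*u)) := by
          apply intervalIntegral.integral_congr
          intro t _
          beta_reduce
          rw [hK' t, intervalIntegral.integral_const_mul]
      _ = ∫ u in a..(x-a), ∫ t in (u+a)..x, g t * (g (t-u) * y0 ρ ν (x - 2*u)) := hTB
      _ = _ := by
          apply intervalIntegral.integral_congr
          intro u _
          beta_reduce
          rw [show (fun t => g t * (g (t-u) * y0 ρ ν (x - 2*u)))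
              = fun t => (g t * g (t-u)) * y0 ρ ν (x - 2*u) from funext fun t => by ring,
            intervalIntegral.integral_mul_const]
  have hP3 : IntervalIntegrable
      (fun u => (∫ τ in (u+a)..x, g τ * g (τ-u)) * y0 ρ ν (x - 2*u)) volume a (x-a) := by
    have he : (fun u => ∫ t in (u+a)..x, g t * (g (t-u) * y0 ρ ν (x - 2*u)))
        = fun u => (∫ τ in (u+a)..x, g τ * g (τ-u)) * y0 ρ ν (x - 2*u) := by
      funext u
      rw [show (fun t => g t * (g (t-u) * y0 ρ ν (x - 2*u)))
          = fun t => (g t * g (t-u)) * y0 ρ ν (x - 2*u) from funext fun t => by ring,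
        intervalIntegral.integral_mul_const]
    rw [← he]
    exact hP3i
  -- integrability of the other two RHS pieces
  have hP1 : IntervalIntegrable
      (fun u => g (u+a) * (omg a g u * y0 ρ ν (x - 2*u))) volume a (x-a) := hHI a (x-a)
  have hc2 : Continuous fun u : ℝ => ∫ τ in (u+a)..x, g τ := by
    have h1 : Continuous fun v : ℝ => ∫ τ in x..v, g τ := intervalIntegral.continuous_primitive hgiv x
    have h2 : (fun u : ℝ => ∫ τ in (u+a)..x, g τ) = fun u => - ∫ τ in x..(u+a), g τ :=
      funext fun u => intervalIntegral.integral_symm x (u+a)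
    rw [h2]
    exact (h1.comp (continuous_id.add continuous_const)).neg
  have hP2 : IntervalIntegrable
      (fun u => g u * ((∫ τ in (u+a)..x, g τ) * y0 ρ ν (x - 2*u))) volume a (x-a) :=
    (hgiv a (x-a)).mul_continuousOn ((hc2.mul (hyc.comp
      (continuous_const.sub (continuous_const.mul continuous_id)))).continuousOn)
  -- expand the right-hand side
  have hRterm : (∫ t in a..(x-a), Rfun a g ν x t * y0 ρ ν (x - 2*t))
      = (∫ u in a..(x-a), g (u+a) * (omg a g u * y0 ρ ν (x - 2*u)))
        - (∫ u in a..(x-a), g u * ((∫ τ in (u+a)..x, g τ) * y0 ρ ν (x - 2*u)))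
        + (-1:ℂ)^ν * ∫ u in a..(x-a), (∫ τ in (u+a)..x, g τ * g (τ-u)) * y0 ρ ν (x - 2*u) := by
    have e : ∀ t ∈ Set.uIcc a (x-a), Rfun a g ν x t * y0 ρ ν (x - 2*t)
        = g (t+a) * (omg a g t * y0 ρ ν (x - 2*t))
            - g t * ((∫ τ in (t+a)..x, g τ) * y0 ρ ν (x - 2*t))
          + (-1:ℂ)^ν * ((∫ τ in (t+a)..x, g τ * g (τ-t)) * y0 ρ ν (x - 2*t)) := by
      intro t _
      simp only [Rfun, omg]
      ring
    rw [intervalIntegral.integral_congr e,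
      intervalIntegral.integral_add (hP1.sub hP2) (hP3.const_mul _),
      intervalIntegral.integral_sub hP1 hP2, intervalIntegral.integral_const_mul]
  -- put everything together
  rw [hsplit, hI1, hI2, hI3, hI4, hRterm]
  have h4ρ : (4:ℂ) * ρ^2 ≠ 0 := by
    simp [hρ]
  rcases hν with h | h <;> subst h <;>
    · simp only [pow_zero, pow_one]
      ring
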